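/- Let λ be a standard real with 0 < λ < 1, and let a, b, c be nonnegative hyperreals with a = λb + (1-λ)c. If ¬(a ≻ b) and ¬(a ≻ c) are replaced by a ⪯ b and a ⪯ c (i.e., neither b nor c is qualitatively smaller than a), then a ∼ b and a ∼ c. -/
import Mathlib


open Hyperreal

/-- `x` is qualitatively larger than `y`. -/
def QGT (x y : ℝ*) : Prop := ∃ r : ℝ, 0 < r ∧ (r : ℝ*) ≤ (x - y) / x

/-- qualitative indifference -/
def QSIM (x y : ℝ*) : Prop := ¬ QGT x y ∧ ¬ QGT y x

lemma key12 (l : ℝ) (hl0 : 0 < l) (hl1 : l < 1) (a b c : ℝ*)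
    (ha : 0 ≤ a) (hb : 0 ≤ b) (hc : 0 ≤ c)
    (heq : a = (l : ℝ*) * b + ((1 : ℝ*) - (l : ℝ*)) * c)
    (h : QGT b a) : QGT a c := by
  obtain ⟨r, hr, hle⟩ := h
  have hR : (0 : ℝ*) < (r : ℝ*) := by exact_mod_cast hr
  have hL : (0 : ℝ*) < (l : ℝ*) := by exact_mod_cast hl0
  have hL1 : (l : ℝ*) < 1 := by exact_mod_cast hl1
  have hbpos : 0 < b := by
    rcases hb.lt_or_eq with h' | h'
    · exact h'
    · exfalso
      rw [← h'] at hle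
      simp at hle
      linarith
  have h1 : (r : ℝ*) * b ≤ b - a := (le_div_iff₀ hbpos).1 hle
  have hapos : 0 < a := by
    rcases ha.lt_or_eq with h' | h'
    · exact h'
    · exfalso
      rw [← h'] at heq
      nlinarith [mul_nonneg hL.le hb, mul_nonneg (sub_pos.2 hL1).le hc]
  have hr1 : (r : ℝ*) < 1 := by nlinarith
  have hr1' : r < 1 := by exact_mod_cast hr1
  refine ⟨l * r / ((1 - r) * (1 - l)), div_pos (mul_pos hl0 hr)
    (mul_pos (by linarith) (by linarith)), ?_⟩
  have hden : (0 : ℝ*) < ((1 : ℝ*) - (r : ℝ*)) * ((1 : ℝ*) - (l : ℝ*)) :=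
    mul_pos (by linarith) (by linarith)
  push_cast
  rw [div_le_div_iff₀ hden hapos]
  have h2 : a ≤ (1 - (r : ℝ*)) * b := by nlinarith
  nlinarith [mul_le_mul_of_nonneg_left h1 (mul_pos hL (by linarith : (0:ℝ*) < 1 - (r:ℝ*))).le,
    mul_le_mul_of_nonneg_left h2 (mul_pos hL hR).le]

theorem stmt12 (l : ℝ) (hl0 : 0 < l) (hl1 : l < 1) (a b c : ℝ*)
    (ha : 0 ≤ a) (hb : 0 ≤ b) (hc : 0 ≤ c)
    (heq : a = (l : ℝ*) * b + ((1 : ℝ*) - (l : ℝ*)) * c)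
    (hab : ¬ QGT a b) (hac : ¬ QGT a c) : QSIM a b ∧ QSIM a c := by
  have heq' : a = ((1 - l : ℝ) : ℝ*) * c + ((1 : ℝ*) - ((1 - l : ℝ) : ℝ*)) * b := by
    push_cast
    rw [heq]; ring
  refine ⟨⟨hab, fun h => hac ?_⟩, ⟨hac, fun h => hab ?_⟩⟩
  · exact key12 l hl0 hl1 a b c ha hb hc heq h
  · exact key12 (1 - l) (by linarith) (by linarith) a c b ha hc hb heq' h
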